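/- Let 𝓗 be a complex Hilbert space and K : 𝓗 × 𝓗 → ℂ a continuous kernel such that K(Ax, y) = K(x, A*y) for all x,y ∈ 𝓗 and every injective bounded linear operator A on 𝓗, where A* denotes the adjoint of A. Then there exists a continuous function h : ℂ → ℂ such that K(x,y) = h(⟨x,y⟩) for all x,y ∈ 𝓗. -/

import Mathlib

open scoped ComplexInnerProductSpace

section Aux

variable {H : Type*} [NormedAddCommGroup H] [InnerProductSpace ℂ H] [CompleteSpace H]

private lemma rank1 (K : H → H → ℂ)
    (hadj : ∀ A : H →L[ℂ] H, Function.Injective A →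
      ∀ x y : H, K (A x) y = K x ((ContinuousLinearMap.adjoint A) y))
    (b c : H) (hbc : 1 + ⟪c, b⟫ ≠ 0) (x y : H) :
    K (x + ⟪c, x⟫ • b) y = K x (y + ⟪b, y⟫ • c) := by
  set A : H →L[ℂ] H := ContinuousLinearMap.id ℂ H + (innerSL ℂ c).smulRight b with hAdef
  have hA : ∀ w, A w = w + ⟪c, w⟫ • b := fun w => rfl
  have h0 : ∀ w, A w = 0 → w = 0 := by
    intro w hw
    rw [hA] at hw
    have h1 : ⟪c, w⟫ * (1 + ⟪c, b⟫) = 0 := by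
      have := congrArg (fun v => (⟪c, v⟫ : ℂ)) hw
      simp only [inner_add_right, inner_smul_right, inner_zero_right] at this
      linear_combination this
    have h2 : (⟪c, w⟫ : ℂ) = 0 := by
      rcases mul_eq_zero.mp h1 with h | h
      · exact h
      · exact absurd h hbc
    rw [h2, zero_smul, add_zero] at hw
    exact hw
  have hinj : Function.Injective A := by
    intro w w' hww
    have := h0 (w - w') (by rw [map_sub, hww, sub_self])
    exact sub_eq_zero.mp this
  have hadjA : ContinuousLinearMap.adjoint A
      = ContinuousLinearMap.id ℂ H + (innerSL ℂ b).smulRight c := by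
    symm
    rw [ContinuousLinearMap.eq_adjoint_iff]
    intro u v
    simp only [ContinuousLinearMap.add_apply, ContinuousLinearMap.coe_id', id_eq,
      ContinuousLinearMap.smulRight_apply, innerSL_apply_apply, hA]
    simp only [inner_add_left, inner_add_right, inner_smul_left, inner_smul_right,
      inner_conj_symm]
    ring
  have := hadj A hinj x y
  rw [hadjA] at this
  simpa only [hA, ContinuousLinearMap.add_apply, ContinuousLinearMap.coe_id', id_eq,
    ContinuousLinearMap.smulRight_apply, innerSL_apply_apply] using this

private lemma scalarK (K : H → H → ℂ)
    (hadj : ∀ A : H →L[ℂ] H, Function.Injective A →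
      ∀ x y : H, K (A x) y = K x ((ContinuousLinearMap.adjoint A) y))
    (t : ℂ) (ht : t ≠ 0) (x y : H) :
    K (t • x) y = K x ((starRingEnd ℂ t) • y) := by
  set A : H →L[ℂ] H := t • ContinuousLinearMap.id ℂ H with hAdef
  have hA : ∀ w, A w = t • w := fun w => rfl
  have hinj : Function.Injective A := by
    intro w w' hww
    rw [hA, hA] at hww
    exact smul_right_injective H ht hww
  have hadjA : ContinuousLinearMap.adjoint A
      = (starRingEnd ℂ t) • ContinuousLinearMap.id ℂ H := by
    symm
    rw [ContinuousLinearMap.eq_adjoint_iff]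
    intro u v
    simp [hA, inner_smul_left, inner_smul_right]
  have := hadj A hinj x y
  rw [hadjA] at this
  simpa [hA] using this

end Aux

/-- Let `𝓗` be a complex Hilbert space and `K : 𝓗 × 𝓗 → ℂ` a continuous kernel
with `K(Ax, y) = K(x, A*y)` for every injective bounded linear operator `A` on `𝓗`.  Then
there is a continuous function `h : ℂ → ℂ` such that `K(x,y) = h(⟨x,y⟩)`. -/
theorem stmt_15 {H : Type*} [NormedAddCommGroup H] [InnerProductSpace ℂ H] [CompleteSpace H]
    (K : H → H → ℂ)
    (hKcont : Continuous fun p : H × H => K p.1 p.2)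
    (hadj : ∀ A : H →L[ℂ] H, Function.Injective A →
      ∀ x y : H, K (A x) y = K x ((ContinuousLinearMap.adjoint A) y)) :
    ∃ h : ℂ → ℂ, Continuous h ∧ ∀ x y : H, K x y = h ⟪x, y⟫ := by
  classical
  have hdense : Dense ({(0:ℂ)}ᶜ : Set ℂ) := dense_compl_singleton 0
  -- `K x 0 = K 0 y` for all `x y`
  have F3 : ∀ x y : H, K x 0 = K 0 y := by
    intro x y
    have hf : Continuous fun t : ℂ => K (t • x) y :=
      hKcont.comp ((continuous_id.smul continuous_const).prodMk continuous_const)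
    have hg : Continuous fun t : ℂ => K x ((starRingEnd ℂ t) • y) :=
      hKcont.comp (continuous_const.prodMk (Complex.continuous_conj.smul continuous_const))
    have heq : (fun t : ℂ => K (t • x) y) = fun t : ℂ => K x ((starRingEnd ℂ t) • y) :=
      Continuous.ext_on hdense hf hg (fun t ht => scalarK K hadj t ht x y)
    have := congrFun heq 0
    simpa using this.symm
  -- orthogonal case
  have F4 : ∀ x y : H, ⟪x, y⟫ = 0 → K x y = K x 0 := by
    intro x y hxy
    by_cases hy : y = 0
    · rw [hy]
    · have hyx : (⟪y, x⟫ : ℂ) = 0 := by rw [← inner_conj_symm, hxy, map_zero]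
      have hy2 : ((‖y‖ : ℂ)) ^ 2 ≠ 0 :=
        pow_ne_zero 2 (Complex.ofReal_ne_zero.mpr (norm_ne_zero_iff.mpr hy))
      have key : ∀ s : ℂ, s ≠ 0 → K x (s • y) = K x y := by
        intro s hs
        set c : H := ((s - 1) / (‖y‖ : ℂ) ^ 2) • y with hc
        have hcx : (⟪c, x⟫ : ℂ) = 0 := by
          rw [hc, inner_smul_left, hyx, mul_zero]
        have hcy : (⟪y, y⟫ : ℂ) = (‖y‖ : ℂ) ^ 2 := inner_self_eq_norm_sq_to_K y
        have hconj : (starRingEnd ℂ) ((s - 1) / (‖y‖ : ℂ) ^ 2) * (‖y‖ : ℂ) ^ 2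
            = (starRingEnd ℂ) s - 1 := by
          rw [map_div₀, map_sub, map_one, map_pow, Complex.conj_ofReal]
          field_simp [Complex.ofReal_ne_zero.mpr (norm_ne_zero_iff.mpr hy)]
        have hbc : 1 + (⟪c, y⟫ : ℂ) ≠ 0 := by
          rw [hc, inner_smul_left, hcy, hconj]
          intro hcon
          apply hs
          have h1 : (starRingEnd ℂ) s = 0 := by linear_combination hcon
          simpa using congrArg (starRingEnd ℂ) h1
        have harg : y + (⟪y, y⟫ : ℂ) • c = s • y := by
          rw [hcy, hc, smul_smul]
          have h2 : (‖y‖ : ℂ) ^ 2 * ((s - 1) / (‖y‖ : ℂ) ^ 2) = s - 1 := by field_simp [Complex.ofReal_ne_zero.mpr (norm_ne_zero_iff.mpr hy)]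
          rw [h2, sub_smul, one_smul]
          abel
        have := rank1 K hadj y c hbc x y
        rw [hcx, zero_smul, add_zero, harg] at this
        exact this.symm
      have hf : Continuous fun s : ℂ => K x (s • y) :=
        hKcont.comp (continuous_const.prodMk (continuous_id.smul continuous_const))
      have heq : (fun s : ℂ => K x (s • y)) = fun _ : ℂ => K x y :=
        Continuous.ext_on hdense hf continuous_const (fun s hs => key s hs)
      have := congrFun heq 0
      simpa using this.symm
  by_cases hH : ∀ w : H, w = 0
  · exact ⟨fun _ => K 0 0, continuous_const, fun x y => by rw [hH x, hH y]⟩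
  push_neg at hH
  obtain ⟨v0, hv0⟩ := hH
  set e : H := ‖v0‖⁻¹ • v0 with hedef
  have he : ‖e‖ = 1 := by
    rw [hedef, norm_smul, norm_inv, norm_norm]
    field_simp [norm_ne_zero_iff.mpr hv0]
  have hee : (⟪e, e⟫ : ℂ) = 1 := by
    rw [inner_self_eq_norm_sq_to_K, he]
    norm_num
  refine ⟨fun z => K ((starRingEnd ℂ z) • e) e, ?_, ?_⟩
  · exact hKcont.comp ((Complex.continuous_conj.smul continuous_const).prodMk continuous_const)
  intro x y
  by_cases hz : (⟪x, y⟫ : ℂ) = 0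
  · rw [hz]
    simp only [map_zero, zero_smul]
    rw [F4 x y hz]
    exact F3 x e
  · have hy : y ≠ 0 := fun h => hz (by rw [h, inner_zero_right])
    obtain ⟨b, hbe, hyb⟩ : ∃ b : H, (⟪b, e⟫ : ℂ) = 1 ∧ (⟪y, b⟫ : ℂ) ≠ 0 := by
      by_cases hye : (⟪y, e⟫ : ℂ) = 0
      · refine ⟨e + y, ?_, ?_⟩
        · rw [inner_add_left, hee, hye, add_zero]
        · rw [inner_add_right, hye, zero_add, inner_self_eq_norm_sq_to_K]
          exact pow_ne_zero 2 (Complex.ofReal_ne_zero.mpr (norm_ne_zero_iff.mpr hy))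
      · exact ⟨e, hee, hye⟩
    set c : H := y - e with hc
    have heb : (⟪e, b⟫ : ℂ) = 1 := by rw [← inner_conj_symm, hbe, map_one]
    have hbc : 1 + (⟪c, b⟫ : ℂ) ≠ 0 := by
      rw [hc, inner_sub_left, heb]
      intro hcon
      exact hyb (by linear_combination hcon)
    set v : H := x + (⟪c, x⟫ : ℂ) • b with hv
    have hK1 : K x y = K v e := by
      have h := rank1 K hadj b c hbc x e
      rw [hbe, one_smul, hc, add_sub_cancel] at h
      exact h.symm
    have hve : (⟪v, e⟫ : ℂ) = ⟪x, y⟫ := by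
      rw [hv, inner_add_left, inner_smul_left, hbe, mul_one, hc, inner_sub_left, map_sub,
        inner_conj_symm, inner_conj_symm]
      ring
    set u : H := (starRingEnd ℂ (⟪x, y⟫ : ℂ)) • e with hu
    have hue : (⟪u, e⟫ : ℂ) = ⟪x, y⟫ := by
      rw [hu, inner_smul_left, hee, mul_one, Complex.conj_conj]
    set c2 : H := ((⟪x, y⟫ : ℂ)⁻¹) • e with hc2
    have hyx0 : (⟪y, x⟫ : ℂ) ≠ 0 := fun h => hz (by rw [← inner_conj_symm, h, map_zero])
    have hzc : (starRingEnd ℂ) (⟪x, y⟫ : ℂ) ≠ 0 := by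
      intro h
      exact hz (by simpa using congrArg (starRingEnd ℂ) h)
    have hc2u : (⟪c2, u⟫ : ℂ) = 1 := by
      rw [hc2, hu, inner_smul_left, inner_smul_right, hee, map_inv₀]
      field_simp [hyx0]
    have hc2v : (⟪c2, v⟫ : ℂ) = 1 := by
      have hev : (⟪e, v⟫ : ℂ) = starRingEnd ℂ (⟪x, y⟫ : ℂ) := by
        rw [← inner_conj_symm, hve]
      rw [hc2, inner_smul_left, map_inv₀, hev]
      field_simp [hyx0]
    have hbc2 : 1 + (⟪c2, v - u⟫ : ℂ) ≠ 0 := by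
      rw [inner_sub_right, hc2v, hc2u]
      norm_num
    have hK2 : K v e = K u e := by
      have h := rank1 K hadj (v - u) c2 hbc2 u e
      have hbue : (⟪v - u, e⟫ : ℂ) = 0 := by rw [inner_sub_left, hve, hue, sub_self]
      rw [hc2u, one_smul, add_sub_cancel, hbue, zero_smul, add_zero] at h
      exact h
    rw [hK1, hK2]
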